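/- A distribution F over S is maxmin-fair if and only if, for every distribution D over S, the vector F↑ is greater than or equal to the vector D↑ in lexicographic order. -/

import Mathlib

/-!
A search problem instance consists of a finite type `α` of individuals and a nonempty
collection of feasible solutions, given by a predicate `sol : Finset α → Prop`.
`satSorted p` is the list of satisfaction probabilities of all individuals under `p`,
sorted in non-decreasing order (the vector `p↑`).
-/

variable {α : Type*}

/-- `p` is a probability distribution over the feasible solutions `sol`. -/
def IsDistrib [Fintype α] (sol : Finset α → Prop) (p : Finset α → ℝ) : Prop :=
  (∀ A, 0 ≤ p A) ∧ (∀ A, p A ≠ 0 → sol A) ∧ (∑ A : Finset α, p A) = 1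

/-- The satisfaction probability of individual `u` under the distribution `p`. -/
def sat [Fintype α] [DecidableEq α] (p : Finset α → ℝ) (u : α) : ℝ :=
  ∑ A : Finset α, if u ∈ A then p A else 0

/-- `F` is a maxmin-fair distribution over the feasible solutions `sol`. -/
def MaxminFair [Fintype α] [DecidableEq α] (sol : Finset α → Prop) (F : Finset α → ℝ) : Prop :=
  IsDistrib sol F ∧
    ∀ D, IsDistrib sol D → ∀ u, sat F u < sat D u →
      ∃ v, sat D v < sat F v ∧ sat F v ≤ sat F u

/-- The vector `p↑` of satisfaction probabilities of `p`, sorted in non-decreasing order. -/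
noncomputable def satSorted [Fintype α] [DecidableEq α] (p : Finset α → ℝ) : List ℝ :=
  ((Finset.univ.val.map (sat p)).sort (· ≤ ·))

/-! ### Auxiliary lemmas -/

lemma countP_lex : ∀ (a b : List ℝ), a.Pairwise (· ≤ ·) → b.Pairwise (· ≤ ·) →
    a.length = b.length → ∀ x : ℝ,
    b.countP (fun r => decide (r ≤ x)) < a.countP (fun r => decide (r ≤ x)) →
    (∀ y : ℝ, y < x → b.countP (fun r => decide (r ≤ y)) ≤ a.countP (fun r => decide (r ≤ y))) →
    List.Lex (· < ·) a b := by
  intro a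
  induction a with
  | nil =>
    intro b _ _ hl x hx _
    simp at hx
  | cons h1 t1 ih =>
    intro b hsa hsb hl x hx hy
    match b with
    | [] => simp at hl
    | h2 :: t2 =>
      rcases lt_trichotomy h1 h2 with hc | hc | hc
      · exact List.Lex.rel hc
      · subst hc
        refine List.Lex.cons (ih t2 hsa.of_cons hsb.of_cons (by simpa using hl) x ?_ ?_)
        · by_cases hle : h1 ≤ x <;> simp [List.countP_cons, hle] at hx ⊢ <;> omega
        · intro y hyx
          have := hy y hyx
          by_cases hle : h1 ≤ y <;> simp [List.countP_cons, hle] at this ⊢ <;> omega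
      · exfalso
        have ha1 : ∀ z ∈ h1 :: t1, h1 ≤ z := by
          intro z hz
          rcases List.mem_cons.mp hz with rfl | hz
          · exact le_refl _
          · exact (List.pairwise_cons.mp hsa).1 z hz
        have hax : h1 ≤ x := by
          by_contra hnot
          push_neg at hnot
          have : (h1 :: t1).countP (fun r => decide (r ≤ x)) = 0 :=
            List.countP_eq_zero.mpr (by
              intro z hz
              simpa using not_le.mpr (lt_of_lt_of_le hnot (ha1 z hz)))
          omega
        have h2x : h2 < x := lt_of_lt_of_le hc hax
        have hb := hy h2 h2x
        have hA : (h1 :: t1).countP (fun r => decide (r ≤ h2)) = 0 :=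
          List.countP_eq_zero.mpr (by
            intro z hz
            simpa using not_le.mpr (lt_of_lt_of_le hc (ha1 z hz)))
        have hB : 0 < (h2 :: t2).countP (fun r => decide (r ≤ h2)) :=
          List.countP_pos_iff.mpr ⟨h2, List.mem_cons_self, by simp⟩
        omega

lemma countP_satSorted [Fintype α] [DecidableEq α] (p : Finset α → ℝ) (x : ℝ) :
    (satSorted p).countP (fun r => decide (r ≤ x)) =
      (Finset.univ.filter (fun u => sat p u ≤ x)).card := by
  classical
  have h1 : (satSorted p).countP (fun r => decide (r ≤ x))
      = Multiset.countP (fun r => r ≤ x) (Finset.univ.val.map (sat p)) := by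
    rw [satSorted, ← Multiset.coe_countP, Multiset.sort_eq]
  rw [h1, Multiset.countP_map]
  rfl

lemma satSorted_sorted [Fintype α] [DecidableEq α] (p : Finset α → ℝ) :
    (satSorted p).Pairwise (· ≤ ·) := Multiset.pairwise_sort ..

lemma satSorted_length [Fintype α] [DecidableEq α] (p : Finset α → ℝ) :
    (satSorted p).length = Fintype.card α := by
  rw [satSorted, Multiset.length_sort, Multiset.card_map]
  rfl

lemma sat_nonneg [Fintype α] [DecidableEq α] {sol : Finset α → Prop} {p : Finset α → ℝ}
    (hp : IsDistrib sol p) (u : α) : 0 ≤ sat p u :=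
  Finset.sum_nonneg fun A _ => by split <;> [exact hp.1 A; exact le_refl 0]

lemma sat_le_one [Fintype α] [DecidableEq α] {sol : Finset α → Prop} {p : Finset α → ℝ}
    (hp : IsDistrib sol p) (u : α) : sat p u ≤ 1 := by
  rw [sat, ← hp.2.2]
  exact Finset.sum_le_sum fun A _ => by split <;> [exact le_refl _; exact hp.1 A]

lemma sat_mix [Fintype α] [DecidableEq α] (F D : Finset α → ℝ) (ε : ℝ) (u : α) :
    sat (fun A => (1 - ε) * F A + ε * D A) u = (1 - ε) * sat F u + ε * sat D u := by
  rw [sat, sat, sat, Finset.mul_sum, Finset.mul_sum, ← Finset.sum_add_distrib]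
  refine Finset.sum_congr rfl fun A _ => ?_
  split <;> ring

/-- The key lex comparison: if the counts of individuals with satisfaction at most `x`
witness that `p`'s sorted vector has strictly more small entries at `x`, and at least
as many below `x`, then `satSorted p <lex satSorted q`. -/
lemma satSorted_lex [Fintype α] [DecidableEq α] (p q : Finset α → ℝ) (x : ℝ)
    (hx : (Finset.univ.filter (fun u => sat q u ≤ x)).card
        < (Finset.univ.filter (fun u => sat p u ≤ x)).card)
    (hy : ∀ y : ℝ, y < x → (Finset.univ.filter (fun u => sat q u ≤ y)).card
        ≤ (Finset.univ.filter (fun u => sat p u ≤ y)).card) :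
    List.Lex (· < ·) (satSorted p) (satSorted q) := by
  refine countP_lex _ _ (satSorted_sorted p) (satSorted_sorted q)
    (by rw [satSorted_length, satSorted_length]) x ?_ ?_
  · rw [countP_satSorted, countP_satSorted]; exact hx
  · intro y hyx
    rw [countP_satSorted, countP_satSorted]
    exact hy y hyx

/-- A distribution `F` over the feasible solutions is maxmin-fair if and only if,
for every distribution `D` over the feasible solutions, the sorted vector `F↑` is
greater than or equal to the sorted vector `D↑` in lexicographic order. -/
theorem maxminFair_iff_lex_greatest [Fintype α] [DecidableEq α]
    (sol : Finset α → Prop) (hsol : ∃ A, sol A)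
    (F : Finset α → ℝ) (hF : IsDistrib sol F) :
    MaxminFair sol F ↔
      ∀ D, IsDistrib sol D →
        satSorted D = satSorted F ∨ List.Lex (· < ·) (satSorted D) (satSorted F) := by
  classical
  constructor
  · rintro ⟨-, hfair⟩ D hD
    have htri := (inferInstance : IsTrichotomous (List ℝ) (List.Lex (· < ·)))
    rcases trichotomous_of (List.Lex (· < ·)) (satSorted D) (satSorted F) with h | h | h
    · exact Or.inr h
    · exact Or.inl h
    · -- h : Lex F↑ D↑ ; derive a contradiction
      exfalso
      by_cases hne : (Finset.univ.filter (fun w => sat F w < sat D w)).Nonempty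
      · obtain ⟨u, hu, humin⟩ :=
          (Finset.univ.filter (fun w => sat F w < sat D w)).exists_min_image (sat F) hne
        have hu' : sat F u < sat D u := (Finset.mem_filter.mp hu).2
        obtain ⟨v, hv1, hv2⟩ := hfair D hD u hu'
        -- every w with sat F w < sat F u satisfies sat D w ≤ sat F w
        have hsmall : ∀ (y : ℝ), y < sat F u → ∀ w, sat F w ≤ y → sat D w ≤ y := by
          intro y hy w hw
          have hwn : ¬ sat F w < sat D w := fun hlt =>
            absurd (humin w (Finset.mem_filter.mpr ⟨Finset.mem_univ _, hlt⟩))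
              (not_le.mpr (lt_of_le_of_lt hw hy))
          exact le_trans (not_lt.mp hwn) hw
        have hvx : sat D v < sat F u := lt_of_lt_of_le hv1 hv2
        have hlex : List.Lex (· < ·) (satSorted D) (satSorted F) := by
          refine satSorted_lex D F (sat D v) ?_ ?_
          · refine Finset.card_lt_card ?_
            constructor
            · intro w hw
              have hw' := (Finset.mem_filter.mp hw).2
              exact Finset.mem_filter.mpr
                ⟨Finset.mem_univ _, hsmall (sat D v) hvx w hw'⟩
            · intro hsub
              have hv3 : v ∈ Finset.univ.filter (fun w => sat D w ≤ sat D v) :=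
                Finset.mem_filter.mpr ⟨Finset.mem_univ _, le_refl _⟩
              have := (Finset.mem_filter.mp (hsub hv3)).2
              exact absurd this (not_le.mpr hv1)
          · intro y hyv
            refine Finset.card_le_card ?_
            intro w hw
            have hw' := (Finset.mem_filter.mp hw).2
            exact Finset.mem_filter.mpr
              ⟨Finset.mem_univ _, hsmall y (lt_trans hyv hvx) w hw'⟩
        exact asymm h hlex
      · -- D ≤ F pointwise on satisfactions
        have hle : ∀ w, sat D w ≤ sat F w := by
          intro w
          by_contra hw
          exact hne ⟨w, Finset.mem_filter.mpr ⟨Finset.mem_univ _, not_le.mp hw⟩⟩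
        by_cases hall : ∀ w, sat D w = sat F w
        · have heq : satSorted D = satSorted F := by
            rw [satSorted, satSorted]
            rw [funext hall]
          rw [heq] at h
          exact asymm h h
        · push_neg at hall
          obtain ⟨w, hw⟩ := hall
          have hwlt : sat D w < sat F w := lt_of_le_of_ne (hle w) hw
          have hlex : List.Lex (· < ·) (satSorted D) (satSorted F) := by
            refine satSorted_lex D F (sat D w) ?_ ?_
            · refine Finset.card_lt_card ?_
              constructor
              · intro z hz
                have hz' := (Finset.mem_filter.mp hz).2
                exact Finset.mem_filter.mpr ⟨Finset.mem_univ _, le_trans (hle z) hz'⟩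
              · intro hsub
                have hw3 : w ∈ Finset.univ.filter (fun z => sat D z ≤ sat D w) :=
                  Finset.mem_filter.mpr ⟨Finset.mem_univ _, le_refl _⟩
                have := (Finset.mem_filter.mp (hsub hw3)).2
                exact absurd this (not_le.mpr hwlt)
            · intro y _
              refine Finset.card_le_card ?_
              intro z hz
              have hz' := (Finset.mem_filter.mp hz).2
              exact Finset.mem_filter.mpr ⟨Finset.mem_univ _, le_trans (hle z) hz'⟩
          exact asymm h hlex
  · intro hlex
    refine ⟨hF, ?_⟩
    intro D hD u hu
    by_contra hno
    push_neg at hno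
    -- hno : ∀ v, sat D v < sat F v → sat F u < sat F v
    have key : ∀ v, sat F v ≤ sat F u → sat F v ≤ sat D v := by
      intro v hv
      by_contra hlt
      exact absurd (hno v (not_le.mp hlt)) (not_lt.mpr hv)
    set t := sat F u with ht
    -- choose a small ε
    obtain ⟨ε, hε0, hε1, hεg⟩ :
        ∃ ε : ℝ, 0 < ε ∧ ε < 1 ∧ ∀ v, t < sat F v → ε < sat F v - t := by
      set s : Finset ℝ :=
        insert 1 ((Finset.univ.filter (fun v => t < sat F v)).image (fun v => sat F v - t))
        with hs_def
      have hs : s.Nonempty := ⟨1, Finset.mem_insert_self _ _⟩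
      have hpos : 0 < s.min' hs := by
        rw [Finset.lt_min'_iff]
        intro y hy
        rcases Finset.mem_insert.mp hy with rfl | hy
        · exact one_pos
        · obtain ⟨v, hv, rfl⟩ := Finset.mem_image.mp hy
          have := (Finset.mem_filter.mp hv).2
          linarith
      refine ⟨s.min' hs / 2, by linarith, ?_, ?_⟩
      · have h1 : s.min' hs ≤ 1 := Finset.min'_le _ _ (Finset.mem_insert_self _ _)
        linarith
      · intro v hv
        have hmem : sat F v - t ∈ s := Finset.mem_insert_of_mem
          (Finset.mem_image.mpr ⟨v, Finset.mem_filter.mpr ⟨Finset.mem_univ _, hv⟩, rfl⟩)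
        have := Finset.min'_le _ _ hmem
        linarith
    -- the perturbed distribution
    set E : Finset α → ℝ := fun A => (1 - ε) * F A + ε * D A with hE_def
    have hE : IsDistrib sol E := by
      refine ⟨fun A => add_nonneg (mul_nonneg (by linarith) (hF.1 A))
        (mul_nonneg hε0.le (hD.1 A)), ?_, ?_⟩
      · intro A hA
        by_cases hFA : F A = 0
        · have hDA : D A ≠ 0 := by
            intro hDA
            apply hA
            rw [hE_def]
            simp [hFA, hDA]
          exact hD.2.1 A hDA
        · exact hF.2.1 A hFA
      · rw [hE_def]
        simp only
        rw [Finset.sum_add_distrib, ← Finset.mul_sum, ← Finset.mul_sum, hF.2.2, hD.2.2]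
        ring
    have hsatE : ∀ w, sat E w = (1 - ε) * sat F w + ε * sat D w := fun w => sat_mix F D ε w
    -- facts about sat E
    have hEge : ∀ v, sat F v ≤ t → sat F v ≤ sat E v := by
      intro v hv
      have := key v hv
      rw [hsatE]
      nlinarith
    have hEu : t < sat E u := by
      rw [hsatE]
      rw [← ht]
      nlinarith
    have hEbig : ∀ v, t < sat F v → t < sat E v := by
      intro v hv
      have h1 : sat F v - sat D v ≤ 1 := by
        have := sat_le_one hF v
        have := sat_nonneg hD v
        linarith
      have h2 : ε < sat F v - t := hεg v hv
      rw [hsatE]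
      nlinarith
    -- apply lex counting
    have hlexE : List.Lex (· < ·) (satSorted F) (satSorted E) := by
      refine satSorted_lex F E t ?_ ?_
      · refine Finset.card_lt_card ?_
        constructor
        · intro w hw
          have hw' := (Finset.mem_filter.mp hw).2
          have hwt : sat F w ≤ t := by
            by_contra hc
            exact absurd hw' (not_le.mpr (hEbig w (not_le.mp hc)))
          exact Finset.mem_filter.mpr ⟨Finset.mem_univ _, hwt⟩
        · intro hsub
          have hu3 : u ∈ Finset.univ.filter (fun w => sat F w ≤ t) :=
            Finset.mem_filter.mpr ⟨Finset.mem_univ _, le_of_eq ht.symm⟩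
          have := (Finset.mem_filter.mp (hsub hu3)).2
          exact absurd this (not_le.mpr hEu)
      · intro y hyt
        refine Finset.card_le_card ?_
        intro w hw
        have hw' := (Finset.mem_filter.mp hw).2
        have hwt : sat F w ≤ t := by
          by_contra hc
          exact absurd (le_trans hw' hyt.le) (not_le.mpr (hEbig w (not_le.mp hc)))
        exact Finset.mem_filter.mpr ⟨Finset.mem_univ _, le_trans (hEge w hwt) hw'⟩
    rcases hlex E hE with heq | hlt
    · rw [heq] at hlexE
      exact asymm hlexE hlexE
    · exact asymm hlexE hlt
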